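/- (Bounded iterates for P-AGD) Let F be monotone and L-Lipschitz, A maximally monotone, z* a zero of F + A, and let z_{t+1} = J_{α_t A}((1−β_t)z_t + β_t z_0 − α_t F(z_t)) with α_t = 1/(L√(t+γ)), β_t = γ/(t+γ), γ ≥ 2. Then ‖z_t − z*‖² ≤ 12‖z_0 − z*‖² for all t ≥ 0, and consequently ‖z_t − z_0‖ ≤ (√12 + 1)‖z_0 − z*‖. -/

import Mathlib

open RealInnerProductSpace
set_option maxHeartbeats 1000000

def IsMonotoneOp {d : ℕ}
    (A : EuclideanSpace ℝ (Fin d) → Set (EuclideanSpace ℝ (Fin d))) : Prop :=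
  ∀ x y u v, u ∈ A x → v ∈ A y → (0 : ℝ) ≤ ⟪u - v, x - y⟫

def IsMaximallyMonotone {d : ℕ}
    (A : EuclideanSpace ℝ (Fin d) → Set (EuclideanSpace ℝ (Fin d))) : Prop :=
  IsMonotoneOp A ∧ ∀ B, IsMonotoneOp B → (∀ x, A x ⊆ B x) → B = A

lemma polar_id {E : Type*} [NormedAddCommGroup E] [InnerProductSpace ℝ E] (a b c : E) :
    2 * ⟪a - b, b - c⟫ = ‖a - c‖^2 - ‖a - b‖^2 - ‖b - c‖^2 := by
  have h := norm_add_sq_real (a - b) (b - c)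
  have h2 : a - c = (a-b) + (b-c) := by abel
  rw [h2]; linarith

theorem bounded_iterates {d : ℕ}
    (F : EuclideanSpace ℝ (Fin d) → EuclideanSpace ℝ (Fin d))
    (A : EuclideanSpace ℝ (Fin d) → Set (EuclideanSpace ℝ (Fin d)))
    (L γ : ℝ) (hL : 0 < L) (hγ : 2 ≤ γ)
    (hmono : ∀ z w, (0 : ℝ) ≤ ⟪F z - F w, z - w⟫)
    (hlip : ∀ z w, ‖F z - F w‖ ≤ L * ‖z - w‖)
    (hA : IsMaximallyMonotone A)
    (J : ℝ → EuclideanSpace ℝ (Fin d) → EuclideanSpace ℝ (Fin d))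
    (hJ : ∀ α, 0 < α → ∀ w z, J α w = z ↔ α⁻¹ • (w - z) ∈ A z)
    (α β : ℕ → ℝ)
    (hα : ∀ t : ℕ, α t = 1 / (L * Real.sqrt ((t : ℝ) + γ)))
    (hβ : ∀ t : ℕ, β t = γ / ((t : ℝ) + γ))
    (zs : EuclideanSpace ℝ (Fin d)) (hzs : -F zs ∈ A zs)
    (z : ℕ → EuclideanSpace ℝ (Fin d))
    (hz : ∀ t : ℕ, z (t + 1) =
      J (α t) ((1 - β t) • z t + β t • z 0 - α t • F (z t))) :
    ∀ t : ℕ, ‖z t - zs‖ ^ 2 ≤ 12 * ‖z 0 - zs‖ ^ 2 ∧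
      ‖z t - z 0‖ ≤ (Real.sqrt 12 + 1) * ‖z 0 - zs‖ := by
  have hTpos : ∀ t : ℕ, (0:ℝ) < (t:ℝ) + γ := by
    intro t
    have : (0:ℝ) ≤ (t:ℝ) := Nat.cast_nonneg t
    linarith
  have hsqrtpos : ∀ t : ℕ, 0 < Real.sqrt ((t:ℝ) + γ) :=
    fun t => Real.sqrt_pos.mpr (hTpos t)
  have hαpos : ∀ t : ℕ, 0 < α t := by
    intro t; rw [hα t]; positivity
  have hβ0 : ∀ t : ℕ, 0 ≤ β t := by
    intro t; rw [hβ t]; positivity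
  have hβ1 : ∀ t : ℕ, β t ≤ 1 := by
    intro t; rw [hβ t]
    rw [div_le_one (hTpos t)]
    have : (0:ℝ) ≤ (t:ℝ) := Nat.cast_nonneg t
    linarith
  -- consequence of monotonicity of A at (z(t+1), zs)
  have hstep : ∀ t : ℕ, (0:ℝ) ≤
      ⟪((1 - β t) • (z t - zs) + β t • (z 0 - zs) - α t • (F (z t) - F zs))
        - (z (t+1) - zs), z (t+1) - zs⟫ := by
    intro t
    set a := α t with ha
    have hap : 0 < a := hαpos t
    set w := (1 - β t) • z t + β t • z 0 - a • F (z t) with hw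
    have hJw : J a w = z (t+1) := (hz t).symm
    have hmem : a⁻¹ • (w - z (t+1)) ∈ A (z (t+1)) := (hJ a hap w (z (t+1))).mp hJw
    have h0 := hA.1 (z (t+1)) zs _ _ hmem hzs
    have hveq : a⁻¹ • (w - z (t+1)) - (-F zs)
        = a⁻¹ • (w - z (t+1) + a • F zs) := by
      match_scalars <;> field_simp
    rw [hveq, real_inner_smul_left] at h0
    have h1 : (0:ℝ) ≤ ⟪w - z (t+1) + a • F zs, z (t+1) - zs⟫ := by
      have := mul_le_mul_of_nonneg_left h0 hap.le
      rw [mul_zero, ← mul_assoc, mul_inv_cancel₀ (ne_of_gt hap), one_mul] at this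
      exact this
    have hveq2 : w - z (t+1) + a • F zs
        = ((1 - β t) • (z t - zs) + β t • (z 0 - zs) - a • (F (z t) - F zs))
          - (z (t+1) - zs) := by
      rw [hw]; module
    rwa [hveq2] at h1
  -- key quadratic inequality, all t
  have hkey : ∀ t : ℕ, ‖z (t+1) - zs‖^2 ≤
      (1 - β t) * ‖z t - zs‖^2 + β t * ‖z 0 - zs‖^2
        - (1 - β t) * ‖z t - z (t+1)‖^2
        + 2 * (α t * L) * ‖z t - zs‖ * ‖z t - z (t+1)‖ := by
    intro t
    have hs := hstep t
    set b := β t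
    set a := α t
    set e := z t - zs with he
    set e0 := z 0 - zs with he0
    set e' := z (t+1) - zs with he'
    set g := F (z t) - F zs with hg
    have hsplit : ((1 - b) • e + b • e0 - a • g) - e'
        = (1 - b) • (e - e') + b • (e0 - e') - a • g := by module
    rw [hsplit] at hs
    rw [inner_sub_left, inner_add_left, real_inner_smul_left, real_inner_smul_left,
      real_inner_smul_left] at hs
    have hee' : e - e' = z t - z (t+1) := by rw [he, he']; abel
    have he0e' : e0 - e' = z 0 - z (t+1) := by rw [he0, he']; abel
    have hpol1 : 2 * ⟪e - e', e'⟫ = ‖e‖^2 - ‖e - e'‖^2 - ‖e'‖^2 := by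
      have := polar_id e e' (0 : EuclideanSpace ℝ (Fin d))
      simpa using this
    have hpol2 : 2 * ⟪e0 - e', e'⟫ = ‖e0‖^2 - ‖e0 - e'‖^2 - ‖e'‖^2 := by
      have := polar_id e0 e' (0 : EuclideanSpace ℝ (Fin d))
      simpa using this
    have hinner_g : ⟪g, e'⟫ = ⟪g, e⟫ - ⟪g, e - e'⟫ := by
      rw [← inner_sub_right]; congr 1; abel
    have hge : (0:ℝ) ≤ ⟪g, e⟫ := hmono (z t) zs
    have hcs : ⟪g, e - e'⟫ ≤ ‖g‖ * ‖e - e'‖ := real_inner_le_norm g (e - e')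
    have hgn : ‖g‖ ≤ L * ‖e‖ := hlip (z t) zs
    have hlow : -(a * (L * ‖e‖ * ‖e - e'‖)) ≤ a * ⟪g, e'⟫ := by
      have h1 : ⟪g, e - e'⟫ ≤ L * ‖e‖ * ‖e - e'‖ := by
        calc ⟪g, e - e'⟫ ≤ ‖g‖ * ‖e - e'‖ := hcs
          _ ≤ L * ‖e‖ * ‖e - e'‖ :=
            mul_le_mul_of_nonneg_right hgn (norm_nonneg _)
      have h2 : -(L * ‖e‖ * ‖e - e'‖) ≤ ⟪g, e'⟫ := by
        rw [hinner_g]; linarith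
      have := mul_le_mul_of_nonneg_left h2 (hαpos t).le
      linarith [this]
    have hb0 : 0 ≤ b := hβ0 t
    have hbq : 0 ≤ b * ‖e0 - e'‖^2 := mul_nonneg hb0 (sq_nonneg _)
    have hip1 : ⟪e - e', e'⟫ = (‖e‖^2 - ‖e - e'‖^2 - ‖e'‖^2)/2 := by linarith
    have hip2 : ⟪e0 - e', e'⟫ = (‖e0‖^2 - ‖e0 - e'‖^2 - ‖e'‖^2)/2 := by linarith
    rw [hip1, hip2] at hs
    rw [← hee']
    ring_nf at hs hlow hbq ⊢
    linarith [hs, hlow, hbq]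
  -- recursion for t ≥ 1
  have hrec : ∀ t : ℕ, 1 ≤ t → ‖z (t+1) - zs‖^2 ≤
      (1 - β t + 1/(t:ℝ)) * ‖z t - zs‖^2 + β t * ‖z 0 - zs‖^2 := by
    intro t ht
    have htR : (1:ℝ) ≤ (t:ℝ) := by exact_mod_cast ht
    have htpos : (0:ℝ) < (t:ℝ) := by linarith
    set s := α t * L with hsdef
    have hs2 : s^2 = 1/((t:ℝ) + γ) := by
      rw [hsdef, hα t]
      rw [div_mul_eq_mul_div, one_mul, mul_comm L]
      rw [div_pow, mul_pow, Real.sq_sqrt (hTpos t).le]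
      field_simp
    have h1b : 1 - β t = (t:ℝ) * s^2 := by
      rw [hβ t, hs2]
      field_simp
      ring
    set N := ‖z t - zs‖
    set P := ‖z t - z (t+1)‖
    have young : 2 * s * N * P ≤ ((t:ℝ) * s^2) * P^2 + N^2/(t:ℝ) := by
      have hident : ((t:ℝ) * s^2) * P^2 + N^2/(t:ℝ) - 2 * s * N * P
          = ((t:ℝ) * s * P - N)^2 / (t:ℝ) := by
        field_simp; ring
      nlinarith [div_nonneg (sq_nonneg ((t:ℝ) * s * P - N)) htpos.le, hident]
    have hk := hkey t
    rw [← hsdef] at hk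
    rw [h1b] at hk ⊢
    have hfin : ((t:ℝ) * s^2) * N^2 + β t * ‖z 0 - zs‖^2 - ((t:ℝ)*s^2) * P^2
        + 2 * s * N * P ≤ ((t:ℝ)*s^2 + 1/(t:ℝ)) * N^2 + β t * ‖z 0 - zs‖^2 := by
      have : 2 * s * N * P - ((t:ℝ)*s^2) * P^2 ≤ N^2/(t:ℝ) := by linarith
      have hr : (1/(t:ℝ)) * N^2 = N^2/(t:ℝ) := by ring
      nlinarith [this]
    calc ‖z (t+1) - zs‖^2 ≤ ((t:ℝ)*s^2) * N^2 + β t * ‖z 0 - zs‖^2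
          - ((t:ℝ)*s^2) * P^2 + 2 * s * N * P := by linarith [hk]
      _ ≤ ((t:ℝ)*s^2 + 1/(t:ℝ)) * N^2 + β t * ‖z 0 - zs‖^2 := hfin
  -- nonexpansive-type bound (used at t = 0)
  have hnonexp : ∀ t : ℕ, ‖z (t+1) - zs‖ ≤
      (1 - β t + α t * L) * ‖z t - zs‖ + β t * ‖z 0 - zs‖ := by
    intro t
    have hs := hstep t
    set u := (1 - β t) • (z t - zs) + β t • (z 0 - zs) - α t • (F (z t) - F zs)
      with hu
    set e' := z (t+1) - zs with he'
    have h1 : ‖e'‖^2 ≤ ⟪u, e'⟫ := by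
      rw [inner_sub_left] at hs
      have h2 : ⟪e', e'⟫ = ‖e'‖^2 := real_inner_self_eq_norm_sq e'
      linarith
    have h2 : ⟪u, e'⟫ ≤ ‖u‖ * ‖e'‖ := real_inner_le_norm _ _
    have hb0 : 0 ≤ β t := hβ0 t
    have hb1 : β t ≤ 1 := hβ1 t
    have hap : 0 < α t := hαpos t
    have h3 : ‖u‖ ≤ (1 - β t + α t * L) * ‖z t - zs‖ + β t * ‖z 0 - zs‖ := by
      have n1 : ‖u‖ ≤ ‖(1 - β t) • (z t - zs) + β t • (z 0 - zs)‖
          + ‖α t • (F (z t) - F zs)‖ := norm_sub_le _ _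
      have n2 : ‖(1 - β t) • (z t - zs) + β t • (z 0 - zs)‖
          ≤ ‖(1 - β t) • (z t - zs)‖ + ‖β t • (z 0 - zs)‖ := norm_add_le _ _
      have n3 : ‖(1 - β t) • (z t - zs)‖ = (1 - β t) * ‖z t - zs‖ := by
        rw [norm_smul, Real.norm_eq_abs, abs_of_nonneg (by linarith)]
      have n4 : ‖β t • (z 0 - zs)‖ = β t * ‖z 0 - zs‖ := by
        rw [norm_smul, Real.norm_eq_abs, abs_of_nonneg hb0]
      have n5 : ‖α t • (F (z t) - F zs)‖ ≤ α t * (L * ‖z t - zs‖) := by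
        rw [norm_smul, Real.norm_eq_abs, abs_of_nonneg hap.le]
        exact mul_le_mul_of_nonneg_left (hlip (z t) zs) hap.le
      nlinarith [n1, n2, n3, n4, n5]
    have hR : 0 ≤ (1 - β t + α t * L) * ‖z t - zs‖ + β t * ‖z 0 - zs‖ := by
      have := norm_nonneg (z t - zs)
      have := norm_nonneg (z 0 - zs)
      have h4 : 0 ≤ (1 - β t + α t * L) := by nlinarith
      nlinarith
    rcases eq_or_lt_of_le (norm_nonneg e') with h|h
    · rw [← h]; exact hR
    · have h5 : ‖e'‖ * ‖e'‖ ≤ ((1 - β t + α t * L) * ‖z t - zs‖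
          + β t * ‖z 0 - zs‖) * ‖e'‖ := by
        nlinarith [h1, h2, h3, norm_nonneg u]
      exact le_of_mul_le_mul_right h5 h
  -- base case estimates
  have hβ00 : β 0 = 1 := by
    rw [hβ 0]
    norm_num
    exact (show (0:ℝ) < γ by linarith).ne'
  have hα0L : α 0 * L ≤ 5/7 := by
    have hγpos : (0:ℝ) < γ := by linarith
    have hsγ : 0 < Real.sqrt γ := Real.sqrt_pos.mpr hγpos
    have h14 : (7/5:ℝ) ≤ Real.sqrt γ := by
      have h1 : Real.sqrt (49/25) ≤ Real.sqrt γ :=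
        Real.sqrt_le_sqrt (by linarith)
      rwa [show (49/25:ℝ) = (7/5)^2 by norm_num, Real.sqrt_sq (by norm_num)] at h1
    have heq : α 0 * L = 1 / Real.sqrt γ := by
      rw [hα 0]
      push_cast
      rw [zero_add]
      field_simp
    rw [heq, div_le_div_iff₀ hsγ (by norm_num)]
    linarith
  have hE1 : ‖z 1 - zs‖^2 ≤ 3 * ‖z 0 - zs‖^2 := by
    have h1 := hnonexp 0
    rw [hβ00] at h1
    have h2 : ‖z 1 - zs‖ ≤ (12/7) * ‖z 0 - zs‖ := by
      have hD := norm_nonneg (z 0 - zs)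
      nlinarith [h1, hα0L]
    nlinarith [norm_nonneg (z 1 - zs), norm_nonneg (z 0 - zs)]
  have hE2 : ‖z 2 - zs‖^2 ≤ 5 * ‖z 0 - zs‖^2 := by
    have hr := hrec 1 le_rfl
    have hb1a : 2/3 ≤ β 1 := by
      rw [hβ 1]
      rw [div_le_div_iff₀ (by norm_num) (hTpos 1)]
      push_cast
      linarith
    have hc : (1 - β 1 + 1/((1:ℕ):ℝ)) = 2 - β 1 := by push_cast; ring
    rw [hc] at hr
    have hE1' : 0 ≤ ‖z 1 - zs‖^2 := sq_nonneg _
    have hD2 : 0 ≤ ‖z 0 - zs‖^2 := sq_nonneg _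
    have hb1b : β 1 ≤ 1 := hβ1 1
    nlinarith [hr, hE1, mul_nonneg (by linarith : (0:ℝ) ≤ β 1 - 2/3) hE1',
      mul_nonneg (by linarith : (0:ℝ) ≤ 2 - β 1) (by linarith : (0:ℝ) ≤ 3 * ‖z 0 - zs‖^2 - ‖z 1 - zs‖^2)]
  have hE3 : ‖z 3 - zs‖^2 ≤ 6 * ‖z 0 - zs‖^2 := by
    have hr := hrec 2 (by norm_num)
    have hb2a : 1/2 ≤ β 2 := by
      rw [hβ 2]
      rw [div_le_div_iff₀ (by norm_num) (hTpos 2)]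
      push_cast
      linarith
    have hb2b : β 2 ≤ 1 := hβ1 2
    have hc : (1 - β 2 + 1/((2:ℕ):ℝ)) = 3/2 - β 2 := by push_cast; ring
    rw [hc] at hr
    have hE2' : 0 ≤ ‖z 2 - zs‖^2 := sq_nonneg _
    have hD2 : 0 ≤ ‖z 0 - zs‖^2 := sq_nonneg _
    nlinarith [hr, hE2, mul_nonneg (by linarith : (0:ℝ) ≤ β 2 - 1/2) hE2',
      mul_nonneg (by linarith : (0:ℝ) ≤ 3/2 - β 2) (by linarith : (0:ℝ) ≤ 5 * ‖z 0 - zs‖^2 - ‖z 2 - zs‖^2)]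
  -- inductive step for t ≥ 3
  have hstep12 : ∀ t : ℕ, 3 ≤ t → ‖z t - zs‖^2 ≤ 12 * ‖z 0 - zs‖^2 →
      ‖z (t+1) - zs‖^2 ≤ 12 * ‖z 0 - zs‖^2 := by
    intro t ht hEt
    have htR : (3:ℝ) ≤ (t:ℝ) := by exact_mod_cast ht
    have htpos : (0:ℝ) < (t:ℝ) := by linarith
    have hr := hrec t (by omega)
    have hb0 : 0 ≤ β t := hβ0 t
    have hb1 : β t ≤ 1 := hβ1 t
    have h12 : 12/(t:ℝ) ≤ 11 * β t := by
      rw [hβ t, ← mul_div_assoc, div_le_div_iff₀ htpos (hTpos t)]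
      nlinarith [mul_nonneg (by linarith : (0:ℝ) ≤ (t:ℝ) - 3)
        (by linarith : (0:ℝ) ≤ 11*γ - 12)]
    have hcoeff : 0 ≤ 1 - β t + 1/(t:ℝ) := by
      have : 0 < 1/(t:ℝ) := by positivity
      linarith
    have hD2 : 0 ≤ ‖z 0 - zs‖^2 := sq_nonneg _
    have hprod : (1 - β t + 1/(t:ℝ)) * ‖z t - zs‖^2
        ≤ (1 - β t + 1/(t:ℝ)) * (12 * ‖z 0 - zs‖^2) :=
      mul_le_mul_of_nonneg_left hEt hcoeff
    have hlast : 0 ≤ (11 * β t - 12/(t:ℝ)) * ‖z 0 - zs‖^2 :=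
      mul_nonneg (by linarith) hD2
    ring_nf at hr hprod hlast ⊢
    linarith [hr, hprod, hlast]
  -- main bound
  have hmain : ∀ t : ℕ, ‖z t - zs‖^2 ≤ 12 * ‖z 0 - zs‖^2 := by
    intro t
    induction t with
    | zero => nlinarith [sq_nonneg ‖z 0 - zs‖]
    | succ n ih =>
      match n, ih with
      | 0, _ => nlinarith [hE1, sq_nonneg ‖z 0 - zs‖]
      | 1, _ => nlinarith [hE2, sq_nonneg ‖z 0 - zs‖]
      | 2, _ => nlinarith [hE3, sq_nonneg ‖z 0 - zs‖]
      | (m+3), ih => exact hstep12 (m+3) (by omega) ih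
  -- conclusion
  intro t
  refine ⟨hmain t, ?_⟩
  have hD : 0 ≤ ‖z 0 - zs‖ := norm_nonneg _
  have h1 : ‖z t - zs‖ ≤ Real.sqrt 12 * ‖z 0 - zs‖ := by
    calc ‖z t - zs‖ = Real.sqrt (‖z t - zs‖^2) := (Real.sqrt_sq (norm_nonneg _)).symm
      _ ≤ Real.sqrt (12 * ‖z 0 - zs‖^2) := Real.sqrt_le_sqrt (hmain t)
      _ = Real.sqrt 12 * ‖z 0 - zs‖ := by
          rw [Real.sqrt_mul (by norm_num : (0:ℝ) ≤ 12), Real.sqrt_sq hD]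
  have h3 : z t - z 0 = (z t - zs) + (zs - z 0) := by abel
  calc ‖z t - z 0‖ = ‖(z t - zs) + (zs - z 0)‖ := by rw [h3]
    _ ≤ ‖z t - zs‖ + ‖zs - z 0‖ := norm_add_le _ _
    _ ≤ Real.sqrt 12 * ‖z 0 - zs‖ + ‖z 0 - zs‖ := by
        rw [norm_sub_rev zs (z 0)]; linarith
    _ = (Real.sqrt 12 + 1) * ‖z 0 - zs‖ := by ring
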